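/- Let A ∈ Z^{d×n} be a set-packing configuration: the first n−d columns lie in {0,1}^d, the last d columns are −I_d, and c = (1,…,1,0,…,0) with n−d ones. Let γ(b) denote the optimal value of min{c·x : Ax = b, x ≥ 0} for b ∈ Z^d, and assume γ(b) ∈ Z for all b ∈ Z^d. If x is an optimal solution of this LP with x_l > 0 for some index l with n−d+1 ≤ l ≤ n (so a_l = −e_{l−(n−d)} and c_l = 0), then there exists an optimal solution x* with x*_l ≥ 1. -/

import Mathlib

def feas {d n : ℕ} (A : Matrix (Fin d) (Fin n) ℤ) (b : Fin d → ℝ) (x : Fin n → ℝ) : Prop :=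
  (∀ j, 0 ≤ x j) ∧ ∀ i, ∑ j, (A i j : ℝ) * x j = b i

def lpOpt {d n : ℕ} (A : Matrix (Fin d) (Fin n) ℤ) (c : Fin n → ℝ) (b : Fin d → ℝ)
    (x : Fin n → ℝ) : Prop :=
  feas A b x ∧ ∀ y, feas A b y → ∑ j, c j * x j ≤ ∑ j, c j * y j

/-- Fulkerson's pluperfect lemma, slack-variable case. -/
theorem stmt9 {d m : ℕ} (A : Matrix (Fin d) (Fin (m + d)) ℤ) (c : Fin (m + d) → ℝ)
    (hclq : ∀ i, ∀ j : Fin m, A i (Fin.castAdd d j) = 0 ∨ A i (Fin.castAdd d j) = 1)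
    (hslack : ∀ i, ∀ j : Fin d, A i (Fin.natAdd m j) = if i = j then -1 else 0)
    (hc1 : ∀ j : Fin m, c (Fin.castAdd d j) = 1)
    (hc0 : ∀ j : Fin d, c (Fin.natAdd m j) = 0)
    -- γ(b) ∈ ℤ for all b ∈ ℤ^d
    (hγ : ∀ b : Fin d → ℤ, ∀ x, lpOpt A c (fun i => (b i : ℝ)) x →
      ∃ k : ℤ, ∑ j, c j * x j = (k : ℝ))
    (b : Fin d → ℤ) (x : Fin (m + d) → ℝ) (hx : lpOpt A c (fun i => (b i : ℝ)) x)
    (l : Fin d) (hpos : 0 < x (Fin.natAdd m l)) :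
    ∃ xs, lpOpt A c (fun i => (b i : ℝ)) xs ∧ 1 ≤ xs (Fin.natAdd m l) := by
  rcases le_or_gt 1 (x (Fin.natAdd m l)) with h1 | h1
  · exact ⟨x, hx, h1⟩
  obtain ⟨k, hk⟩ := hγ b x hx
  set s : ℝ := x (Fin.natAdd m l) with hsdef
  -- general slack-column sum
  have hslacksum : ∀ (g : Fin d → ℝ) (i : Fin d),
      ∑ j : Fin d, (A i (Fin.natAdd m j) : ℝ) * g j = -(g i) := by
    intro g i
    have h : ∀ j : Fin d, (A i (Fin.natAdd m j) : ℝ) * g j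
        = if j = i then -(g i) else 0 := by
      intro j
      rw [hslack]
      by_cases h : i = j
      · subst h; simp
      · simp [h, Ne.symm h, (fun hh => h hh.symm : ¬ j = i)]
    rw [Finset.sum_congr rfl fun j _ => h j, Finset.sum_ite_eq']
    simp
  -- cost equals sum of first coordinates
  have hcostfirst : ∀ y : Fin (m + d) → ℝ,
      ∑ j, c j * y j = ∑ jm : Fin m, y (Fin.castAdd d jm) := by
    intro y
    rw [Fin.sum_univ_add]
    simp [hc1, hc0]
  -- row equations of x, split
  have hrowx : ∀ i, ∑ j : Fin m, (A i (Fin.castAdd d j) : ℝ) * x (Fin.castAdd d j)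
      = (b i : ℝ) + x (Fin.natAdd m i) := by
    intro i
    have h := hx.1.2 i
    rw [Fin.sum_univ_add, hslacksum (fun j => x (Fin.natAdd m j))] at h
    linarith
  -- find a column covering row l
  have hj0 : ∃ j0 : Fin m, A l (Fin.castAdd d j0) = 1 := by
    by_contra hno
    push_neg at hno
    have h0 : ∀ j : Fin m, A l (Fin.castAdd d j) = 0 := fun j =>
      (hclq l j).resolve_right (hno j)
    have h := hrowx l
    rw [Finset.sum_eq_zero (fun j _ => by rw [h0]; simp)] at h
    have hb1 : (b l : ℝ) < 0 := by linarith
    have hb2 : (-1 : ℝ) < (b l : ℝ) := by linarith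
    have hb1' : b l < 0 := by exact_mod_cast hb1
    have hb2' : (-1 : ℤ) < b l := by exact_mod_cast hb2
    omega
  obtain ⟨j0, hj0⟩ := hj0
  have hAJ : ∀ i, (0 : ℝ) ≤ (A i (Fin.castAdd d j0) : ℝ) ∧ (A i (Fin.castAdd d j0) : ℝ) ≤ 1 := by
    intro i
    rcases hclq i j0 with h | h <;> rw [h] <;> norm_num
  set bI : Fin d → ℤ := fun i => b i + if i = l then 1 else 0 with hbIdef
  -- the shifted feasible point x'
  set x' : Fin (m + d) → ℝ := Fin.addCases
      (fun jm => x (Fin.castAdd d jm) + if jm = j0 then (1 - s) else 0)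
      (fun i => if i = l then 0 else
        x (Fin.natAdd m i) + (1 - s) * (A i (Fin.castAdd d j0) : ℝ)) with hx'def
  have hx'c : ∀ jm : Fin m, x' (Fin.castAdd d jm)
      = x (Fin.castAdd d jm) + if jm = j0 then (1 - s) else 0 := by
    intro jm; rw [hx'def]; simp
  have hx'n : ∀ i : Fin d, x' (Fin.natAdd m i)
      = if i = l then 0 else
        x (Fin.natAdd m i) + (1 - s) * (A i (Fin.castAdd d j0) : ℝ) := by
    intro i; rw [hx'def]; simp
  have hx'nonneg : ∀ j, 0 ≤ x' j := by
    intro j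
    induction j using Fin.addCases with
    | left jm =>
      rw [hx'c]
      have := hx.1.1 (Fin.castAdd d jm)
      split_ifs <;> linarith
    | right i =>
      rw [hx'n]
      have h1 := hx.1.1 (Fin.natAdd m i)
      have h2 := (hAJ i).1
      split_ifs
      · exact le_refl 0
      · nlinarith
  have hfirstsum : ∀ (i : Fin d),
      ∑ jm : Fin m, (A i (Fin.castAdd d jm) : ℝ) * x' (Fin.castAdd d jm)
      = (∑ jm : Fin m, (A i (Fin.castAdd d jm) : ℝ) * x (Fin.castAdd d jm))
        + (1 - s) * (A i (Fin.castAdd d j0) : ℝ) := by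
    intro i
    rw [Finset.sum_congr rfl (fun jm _ => by rw [hx'c jm])]
    rw [Finset.sum_congr rfl (fun jm _ => mul_add _ _ _), Finset.sum_add_distrib]
    congr 1
    rw [Finset.sum_congr rfl (fun jm _ => by
      rw [mul_ite, mul_zero])]
    rw [Finset.sum_ite_eq']
    simp [mul_comm]
  have hrowx' : ∀ i, ∑ j, (A i j : ℝ) * x' j = (bI i : ℝ) := by
    intro i
    rw [Fin.sum_univ_add, hslacksum (fun j => x' (Fin.natAdd m j)), hfirstsum]
    simp only [hx'n, hbIdef]
    by_cases h : i = l
    · subst h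
      rw [hrowx i, hj0]
      push_cast
      simp
      linarith [hsdef]
    · simp only [if_neg h]
      rw [hrowx i]
      push_cast [if_neg h]
      ring
  have hcostx : ∑ j, c j * x j = (k : ℝ) := hk
  have hcostx' : ∑ j, c j * x' j = (k : ℝ) + (1 - s) := by
    rw [hcostfirst]
    rw [Finset.sum_congr rfl (fun jm _ => hx'c jm), Finset.sum_add_distrib,
      Finset.sum_ite_eq']
    rw [← hcostfirst, hk]
    simp
  set K : ℝ := (k : ℝ) + (1 - s) with hKdef
  set b' : Fin d → ℝ := fun i => (bI i : ℝ) with hb'def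
  set S : Set (Fin (m + d) → ℝ) := {y | feas A b' y ∧ ∑ j, c j * y j ≤ K} with hSdef
  set Rf : Fin (m + d) → ℝ := Fin.addCases (fun _ => K) (fun i => K - b' i) with hRfdef
  set box : Set (Fin (m + d) → ℝ) := Set.pi Set.univ (fun j => Set.Icc 0 (Rf j)) with hboxdef
  have hSbox : S ⊆ box := by
    rintro y ⟨⟨hy0, hyrow⟩, hyK⟩ j _
    refine ⟨hy0 j, ?_⟩
    have hysum : ∑ jm : Fin m, y (Fin.castAdd d jm) ≤ K := by
      rw [← hcostfirst]; exact hyK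
    induction j using Fin.addCases with
    | left jm =>
      rw [hRfdef]
      simp only [Fin.addCases_left]
      calc y (Fin.castAdd d jm) ≤ ∑ jm' : Fin m, y (Fin.castAdd d jm') :=
            Finset.single_le_sum (fun jm' _ => hy0 (Fin.castAdd d jm'))
              (Finset.mem_univ jm)
        _ ≤ K := hysum
    | right i =>
      rw [hRfdef]
      simp only [Fin.addCases_right]
      have h := hyrow i
      rw [Fin.sum_univ_add, hslacksum (fun j => y (Fin.natAdd m j))] at h
      have hle : ∑ jm : Fin m, (A i (Fin.castAdd d jm) : ℝ) * y (Fin.castAdd d jm)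
          ≤ ∑ jm : Fin m, y (Fin.castAdd d jm) := by
        apply Finset.sum_le_sum
        intro jm _
        have h0 := hy0 (Fin.castAdd d jm)
        rcases hclq i jm with hA | hA <;> rw [hA] <;> push_cast <;> nlinarith
      linarith
  have hcont : ∀ w : Fin (m + d) → ℝ,
      Continuous fun y : Fin (m + d) → ℝ => ∑ j, w j * y j := by
    intro w
    exact continuous_finset_sum _ fun j _ => continuous_const.mul (continuous_apply j)
  have hSclosed : IsClosed S := by
    have hrw : S = (⋂ j, {y : Fin (m + d) → ℝ | 0 ≤ y j}) ∩
        ((⋂ i, {y : Fin (m + d) → ℝ | ∑ j, (A i j : ℝ) * y j = b' i}) ∩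
          {y : Fin (m + d) → ℝ | ∑ j, c j * y j ≤ K}) := by
      ext y
      simp only [hSdef, Set.mem_setOf_eq, Set.mem_inter_iff, Set.mem_iInter,
        Set.mem_setOf_eq, feas]
      tauto
    rw [hrw]
    exact (isClosed_iInter fun j =>
        isClosed_le continuous_const (continuous_apply j)).inter
      ((isClosed_iInter fun i => isClosed_eq (hcont _) continuous_const).inter
        (isClosed_le (hcont c) continuous_const))
  have hboxcomp : IsCompact box := isCompact_univ_pi fun j => isCompact_Icc
  have hTcomp : IsCompact (box ∩ S) := hboxcomp.inter_right hSclosed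
  have hx'S : x' ∈ S := by
    refine ⟨⟨hx'nonneg, fun i => hrowx' i⟩, ?_⟩
    rw [hcostx']
  have hx'T : x' ∈ box ∩ S := ⟨hSbox hx'S, hx'S⟩
  obtain ⟨xs0, hxs0T, hmin⟩ :=
    hTcomp.exists_isMinOn ⟨x', hx'T⟩ ((hcont c).continuousOn)
  have hxs0feas : feas A b' xs0 := hxs0T.2.1
  have hxs0nn : ∀ j, 0 ≤ xs0 j := hxs0feas.1
  have hxs0row : ∀ i, ∑ j, (A i j : ℝ) * xs0 j = b' i := hxs0feas.2
  have hopt : lpOpt A c b' xs0 := by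
    refine ⟨hxs0T.2.1, fun y hy => ?_⟩
    by_cases hyK : ∑ j, c j * y j ≤ K
    · exact isMinOn_iff.mp hmin y ⟨hSbox ⟨hy, hyK⟩, hy, hyK⟩
    · push_neg at hyK
      have h1 : ∑ j, c j * xs0 j ≤ ∑ j, c j * x' j := isMinOn_iff.mp hmin x' hx'T
      rw [hcostx'] at h1
      linarith
  obtain ⟨k', hk'⟩ := hγ bI xs0 hopt
  -- the final solution: xs0 with slack l increased by 1
  set ys : Fin (m + d) → ℝ := fun j => xs0 j + if j = Fin.natAdd m l then 1 else 0
    with hysdef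
  have hAiteL : ∀ i : Fin d,
      ∑ j, (A i j : ℝ) * (if j = Fin.natAdd m l then (1 : ℝ) else 0)
      = (A i (Fin.natAdd m l) : ℝ) := by
    intro i
    rw [Finset.sum_congr rfl (fun j _ => by rw [mul_ite, mul_one, mul_zero])]
    rw [Finset.sum_ite_eq']
    simp
  have hysfeas : feas A (fun i => (b i : ℝ)) ys := by
    constructor
    · intro j
      simp only [hysdef]
      have := hxs0nn j
      split_ifs <;> linarith
    · intro i
      have h2 : ∀ j, (A i j : ℝ) * ys j
          = (A i j : ℝ) * xs0 j + (A i j : ℝ) * (if j = Fin.natAdd m l then 1 else 0) := by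
        intro j; simp only [hysdef]; ring
      rw [Finset.sum_congr rfl fun j _ => h2 j, Finset.sum_add_distrib, hxs0row i,
        hAiteL i, hslack]
      by_cases h : i = l
      · simp only [h, if_pos rfl, hb'def, hbIdef]
        push_cast
        ring
      · rw [if_neg h]
        simp only [hb'def, hbIdef, if_neg h]
        push_cast
        ring
  have hcostys : ∑ j, c j * ys j = ∑ j, c j * xs0 j := by
    have h2 : ∀ j, c j * ys j
        = c j * xs0 j + c j * (if j = Fin.natAdd m l then 1 else 0) := by
      intro j; simp only [hysdef]; ring
    rw [Finset.sum_congr rfl fun j _ => h2 j, Finset.sum_add_distrib]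
    have h3 : ∑ j, c j * (if j = Fin.natAdd m l then (1 : ℝ) else 0) = 0 := by
      rw [Finset.sum_congr rfl (fun j _ => by rw [mul_ite, mul_one, mul_zero]),
        Finset.sum_ite_eq']
      simp [hc0 l]
    rw [h3, add_zero]
  -- k ≤ k'
  have hkk1 : (k : ℝ) ≤ (k' : ℝ) := by
    have := hx.2 ys hysfeas
    rw [hcostys, hk', hk] at this
    exact this
  -- k' ≤ k
  have hkk2 : (k' : ℝ) < (k : ℝ) + 1 := by
    have h1 : ∑ j, c j * xs0 j ≤ ∑ j, c j * x' j := isMinOn_iff.mp hmin x' hx'T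
    rw [hcostx', hk'] at h1
    linarith
  have hkk : k' = k := by
    have h1 : k ≤ k' := by exact_mod_cast hkk1
    have h2 : (k' : ℤ) < k + 1 := by exact_mod_cast hkk2
    omega
  refine ⟨ys, ⟨hysfeas, fun y hy => ?_⟩, ?_⟩
  · rw [hcostys, hk', hkk, ← hk]
    exact hx.2 y hy
  · have := hxs0nn (Fin.natAdd m l)
    simp [hysdef]
    linarith
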